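/- There exist 13 points p_1, …, p_13 in the unit square [0,1]^2 such that for every triple 1 ≤ i < j < k ≤ 13, the area of the triangle with vertices p_i, p_j, p_k, namely (1/2)·|det(p_j − p_i, p_k − p_i)|, is at least 0.0259285138. -/
import Mathlib

def heilbronnAx : Fin 13 → ℤ := ![468926, 81320, 1000000, 870349, 81327, 328593, 796021, 711381, 0, 578912, 0, 341306, 1000000]
def heilbronnAy : Fin 13 → ℤ := ![834749, 353808, 472730, 891716, 1000000, 328632, 507189, 1000000, 899133, 90754, 90702, 0, 0]

set_option maxRecDepth 100000 in
theorem heilbronn_keyZ : ∀ i j k : Fin 13, i < j → j < k →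
    (51857027600 : ℕ) ≤ ((heilbronnAx j - heilbronnAx i) * (heilbronnAy k - heilbronnAy i)
      - (heilbronnAy j - heilbronnAy i) * (heilbronnAx k - heilbronnAx i)).natAbs := by decide

theorem heilbronn_rangeZ : ∀ i : Fin 13,
    0 ≤ heilbronnAx i ∧ heilbronnAx i ≤ 1000000 ∧ 0 ≤ heilbronnAy i ∧ heilbronnAy i ≤ 1000000 := by
  decide

/-- Heilbronn configuration of 13 points with minimum triangle area at least 0.0259285138. -/
theorem heilbronn_13 : ∃ p : Fin 13 → ℝ × ℝ,
    (∀ i, (p i).1 ∈ Set.Icc (0:ℝ) 1 ∧ (p i).2 ∈ Set.Icc (0:ℝ) 1) ∧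
    ∀ i j k : Fin 13, i < j → j < k →
      (0.0259285138 : ℝ) ≤ (1/2) * |((p j).1 - (p i).1) * ((p k).2 - (p i).2)
        - ((p j).2 - (p i).2) * ((p k).1 - (p i).1)| := by
  refine ⟨fun i => ((heilbronnAx i : ℝ) / 1000000, (heilbronnAy i : ℝ) / 1000000), ?_, ?_⟩
  · intro i
    obtain ⟨h1, h2, h3, h4⟩ := heilbronn_rangeZ i
    have h1' : (0:ℝ) ≤ (heilbronnAx i : ℝ) := by exact_mod_cast h1
    have h2' : (heilbronnAx i : ℝ) ≤ 1000000 := by exact_mod_cast h2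
    have h3' : (0:ℝ) ≤ (heilbronnAy i : ℝ) := by exact_mod_cast h3
    have h4' : (heilbronnAy i : ℝ) ≤ 1000000 := by exact_mod_cast h4
    constructor <;> constructor <;> simp only [] <;> [positivity; skip; positivity; skip] <;>
      rw [div_le_one (by norm_num)] <;> linarith
  · intro i j k hij hjk
    have h := heilbronn_keyZ i j k hij hjk
    set D : ℤ := (heilbronnAx j - heilbronnAx i) * (heilbronnAy k - heilbronnAy i)
      - (heilbronnAy j - heilbronnAy i) * (heilbronnAx k - heilbronnAx i) with hD
    have heq : ((heilbronnAx j : ℝ)/1000000 - (heilbronnAx i : ℝ)/1000000) *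
          ((heilbronnAy k : ℝ)/1000000 - (heilbronnAy i : ℝ)/1000000)
        - ((heilbronnAy j : ℝ)/1000000 - (heilbronnAy i : ℝ)/1000000) *
          ((heilbronnAx k : ℝ)/1000000 - (heilbronnAx i : ℝ)/1000000)
        = (D : ℝ) / 1000000000000 := by
      rw [hD]; push_cast; ring
    simp only [heq]
    rw [abs_div, abs_of_nonneg (by norm_num : (0:ℝ) ≤ 1000000000000)]
    have habs : |(D : ℝ)| = (D.natAbs : ℝ) := by
      rw [Nat.cast_natAbs]; exact Int.cast_abs.symm
    rw [habs]
    have h' : (51857027600 : ℝ) ≤ (D.natAbs : ℝ) := by exact_mod_cast h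
    nlinarith [h']
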